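/- For any polygon P with nonzero signed area, 2·CCM(P) − 3·CM(P) = (1/(2A(P)))·( Σi (xi x_{i+1} + yi y_{i+1})(yi − y_{i+1}), Σi (xi x_{i+1} + yi y_{i+1})(x_{i+1} − xi) ), where CCM and CM are given by their coordinate formulas. -/

import Mathlib

open Finset

/-- Squared norm of a plane vector. -/
noncomputable def nsq (v : ℝ × ℝ) : ℝ := v.1 ^ 2 + v.2 ^ 2

/-- Signed area of the closed polygon with vertices `V i`, indices mod `n`. -/
noncomputable def polyArea {n : ℕ} [NeZero n] (V : ZMod n → ℝ × ℝ) : ℝ :=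
  (∑ i, ((V i).1 * (V (i + 1)).2 - (V (i + 1)).1 * (V i).2)) / 2

/-- The coordinate formula for the circumcenter of mass of a polygon. -/
noncomputable def ccmF {n : ℕ} [NeZero n] (V : ZMod n → ℝ × ℝ) : ℝ × ℝ :=
  (4 * polyArea V)⁻¹ •
    ((∑ i, (V i).2 * (nsq (V (i - 1)) - nsq (V (i + 1)))),
     (∑ i, -(V i).1 * (nsq (V (i - 1)) - nsq (V (i + 1)))))

/-- The centroid of the homogeneous lamina bounded by the polygon. -/
noncomputable def cmF {n : ℕ} [NeZero n] (V : ZMod n → ℝ × ℝ) : ℝ × ℝ :=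
  (6 * polyArea V)⁻¹ •
    ((∑ i, ((V i).1 + (V (i + 1)).1) * ((V i).1 * (V (i + 1)).2 - (V (i + 1)).1 * (V i).2)),
     (∑ i, ((V i).2 + (V (i + 1)).2) * ((V i).1 * (V (i + 1)).2 - (V (i + 1)).1 * (V i).2)))

lemma shift_sum {n : ℕ} [NeZero n] (f : ZMod n → ℝ) :
    ∑ i, f i = ∑ i, f (i + 1) :=
  (Fintype.sum_equiv (Equiv.addRight (1 : ZMod n)) (fun i => f (i + 1)) f
    (fun i => rfl)).symm

theorem stmt7 (n : ℕ) [NeZero n] (V : ZMod n → ℝ × ℝ) (hA : polyArea V ≠ 0) :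
    (2 : ℝ) • ccmF V - (3 : ℝ) • cmF V =
      (2 * polyArea V)⁻¹ •
        ((∑ i, ((V i).1 * (V (i + 1)).1 + (V i).2 * (V (i + 1)).2) * ((V i).2 - (V (i + 1)).2)),
         (∑ i, ((V i).1 * (V (i + 1)).1 + (V i).2 * (V (i + 1)).2) * ((V (i + 1)).1 - (V i).1))) := by
  set A := polyArea V with hAdef
  have hx : (∑ i, (V i).2 * (nsq (V (i - 1)) - nsq (V (i + 1)))) =
      (∑ i, ((V i).1 + (V (i + 1)).1) * ((V i).1 * (V (i + 1)).2 - (V (i + 1)).1 * (V i).2)) +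
      (∑ i, ((V i).1 * (V (i + 1)).1 + (V i).2 * (V (i + 1)).2) * ((V i).2 - (V (i + 1)).2)) := by
    have h1 : (∑ i, (V i).2 * (nsq (V (i - 1)) - nsq (V (i + 1)))) =
        ∑ i, ((V (i + 1)).2 * nsq (V i) - (V i).2 * nsq (V (i + 1))) := by
      have := shift_sum (fun i => (V i).2 * nsq (V (i - 1)))
      simp only [add_sub_cancel_right] at this
      simp only [mul_sub, Finset.sum_sub_distrib, this]
    rw [h1, ← Finset.sum_add_distrib]
    refine Finset.sum_congr rfl fun i _ => ?_
    simp only [nsq]; ring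
  have hy : (∑ i, -(V i).1 * (nsq (V (i - 1)) - nsq (V (i + 1)))) =
      (∑ i, ((V i).2 + (V (i + 1)).2) * ((V i).1 * (V (i + 1)).2 - (V (i + 1)).1 * (V i).2)) +
      (∑ i, ((V i).1 * (V (i + 1)).1 + (V i).2 * (V (i + 1)).2) * ((V (i + 1)).1 - (V i).1)) := by
    have h1 : (∑ i, -(V i).1 * (nsq (V (i - 1)) - nsq (V (i + 1)))) =
        ∑ i, ((V i).1 * nsq (V (i + 1)) - (V (i + 1)).1 * nsq (V i)) := by
      have := shift_sum (fun i => (V i).1 * nsq (V (i - 1)))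
      simp only [add_sub_cancel_right] at this
      calc (∑ i, -(V i).1 * (nsq (V (i - 1)) - nsq (V (i + 1))))
          = ∑ i, ((V i).1 * nsq (V (i + 1)) - (V i).1 * nsq (V (i - 1))) :=
            Finset.sum_congr rfl (fun i _ => by ring)
        _ = ∑ i, ((V i).1 * nsq (V (i + 1))) - ∑ i, ((V (i + 1)).1 * nsq (V i)) := by
            rw [Finset.sum_sub_distrib, this]
        _ = ∑ i, ((V i).1 * nsq (V (i + 1)) - (V (i + 1)).1 * nsq (V i)) :=
            (Finset.sum_sub_distrib (fun i => (V i).1 * nsq (V (i + 1)))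
              (fun i => (V (i + 1)).1 * nsq (V i))).symm
    rw [h1, ← Finset.sum_add_distrib]
    refine Finset.sum_congr rfl fun i _ => ?_
    simp only [nsq]; ring
  simp only [ccmF, cmF, ← hAdef, Prod.smul_mk, smul_eq_mul, Prod.mk_sub_mk, Prod.smul_def,
    Prod.mk.injEq]
  constructor
  · rw [hx]; field_simp; ring
  · rw [hy]; field_simp; ring
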